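/- Let u₊ : [−1,1] → ℝ be a positive solution of u'' + u² = 0 with u(±1) = 0, u₊ ≢ 0, and let μ be the largest eigenvalue of the Sturm–Liouville operator L = d²/dx² + 2u₊(x) with Dirichlet boundary conditions on (−1,1). Then μ > π²/4. -/

import Mathlib

open Set intervalIntegral

noncomputable def eW (u : ℝ → ℝ) (x : ℝ) : ℝ :=
  deriv u x * Real.cos (Real.pi * x / 2) + Real.pi / 2 * Real.sin (Real.pi * x / 2) * u x

noncomputable def eG (u : ℝ → ℝ) (x : ℝ) : ℝ :=
  -(Real.pi / 2) * Real.sin (Real.pi * x / 2) * (u x)^2 / Real.cos (Real.pi * x / 2)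

lemma aux_cos_pos {x : ℝ} (hx : x ∈ Ioo (-1:ℝ) 1) : 0 < Real.cos (Real.pi * x / 2) := by
  apply Real.cos_pos_of_mem_Ioo
  constructor
  · nlinarith [Real.pi_pos, hx.1, hx.2]
  · nlinarith [Real.pi_pos, hx.1, hx.2]

lemma aux_cos_ge {x : ℝ} (hx : |x| ≤ 1) : 1 - |x| ≤ Real.cos (Real.pi * x / 2) := by
  have hπ := Real.pi_pos
  have h0 : Real.cos (Real.pi * x / 2) = Real.cos (Real.pi * |x| / 2) := by
    rcases abs_cases x with ⟨h, _⟩ | ⟨h, _⟩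
    · rw [h]
    · rw [h]
      rw [show Real.pi * -x / 2 = -(Real.pi * x / 2) by ring, Real.cos_neg]
  rw [h0]
  have := Real.one_sub_mul_le_cos (x := Real.pi * |x| / 2) (by positivity) (by nlinarith [abs_nonneg x])
  calc 1 - |x| = 1 - 2 / Real.pi * (Real.pi * |x| / 2) := by field_simp
    _ ≤ _ := this

lemma aux_contDiff_du (u : ℝ → ℝ) (hC2 : ContDiff ℝ 2 u) : ContDiff ℝ 1 (deriv u) :=
  (contDiff_succ_iff_deriv.mp ((by norm_num : ((1:WithTop ℕ∞)+1) = 2) ▸ hC2)).2.2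

lemma aux_hasDerivAt_W (u : ℝ → ℝ) (hC2 : ContDiff ℝ 2 u) (x : ℝ) :
    HasDerivAt (eW u) (Real.cos (Real.pi * x / 2) * (deriv (deriv u) x + Real.pi^2/4 * u x)) x := by
  have hdu := aux_contDiff_du u hC2
  have hu : HasDerivAt u (deriv u x) x :=
    (hC2.differentiable (by norm_num)).differentiableAt.hasDerivAt
  have hu' : HasDerivAt (deriv u) (deriv (deriv u) x) x :=
    (hdu.differentiable one_ne_zero).differentiableAt.hasDerivAt
  have h1 : HasDerivAt (fun y : ℝ => Real.pi * y / 2) (Real.pi / 2) x := by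
    simpa using ((hasDerivAt_id x).const_mul Real.pi).div_const 2
  have hsin := h1.sin
  have hcos := h1.cos
  have hsum := (hu'.mul hcos).add ((hsin.const_mul (Real.pi / 2)).mul hu)
  exact hsum.congr_deriv (by ring)

lemma aux_hasDerivAt_G (u : ℝ → ℝ) (hC2 : ContDiff ℝ 2 u) {x : ℝ} (hx : x ∈ Ioo (-1:ℝ) 1) :
    HasDerivAt (eG u)
      ((deriv u x)^2 - Real.pi^2/4 * (u x)^2 - (eW u x / Real.cos (Real.pi * x / 2))^2) x := by
  have hc := aux_cos_pos hx
  have hu : HasDerivAt u (deriv u x) x :=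
    (hC2.differentiable (by norm_num)).differentiableAt.hasDerivAt
  have h1 : HasDerivAt (fun y : ℝ => Real.pi * y / 2) (Real.pi / 2) x := by
    simpa using ((hasDerivAt_id x).const_mul Real.pi).div_const 2
  have hsin := h1.sin
  have hcos := h1.cos
  have husq : HasDerivAt (fun y => (u y)^2) (2 * u x * deriv u x) x := by
    have h2 : HasDerivAt (fun y => (u y)^2) _ x := hu.pow 2
    simpa [mul_comm] using h2
  have hG := ((hsin.const_mul (-(Real.pi/2))).mul husq).div hcos hc.ne'
  refine hG.congr_deriv ?_
  show _ = _
  rw [eW]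
  simp only [Pi.mul_apply]
  field_simp
  ring

lemma aux_cont_W (u : ℝ → ℝ) (hC2 : ContDiff ℝ 2 u) : Continuous (eW u) := by
  have hdu := (aux_contDiff_du u hC2).continuous
  have hu := hC2.continuous
  have hlin : Continuous fun x : ℝ => Real.pi * x / 2 := by continuity
  exact (hdu.mul (Real.continuous_cos.comp hlin)).add
    ((continuous_const.mul (Real.continuous_sin.comp hlin)).mul hu)

lemma aux_cont_f (u : ℝ → ℝ) (hC2 : ContDiff ℝ 2 u) :
    Continuous (fun x => (deriv u x)^2 - Real.pi^2/4*(u x)^2) := by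
  have hdu := (aux_contDiff_du u hC2).continuous
  have hu := hC2.continuous
  continuity

lemma aux_picone (u : ℝ → ℝ) (hC2 : ContDiff ℝ 2 u) {a b : ℝ}
    (ha : -1 < a) (hb : b < 1) (hab : a ≤ b) :
    ∫ x in a..b, ((deriv u x)^2 - Real.pi^2/4*(u x)^2)
      = (∫ x in a..b, (eW u x / Real.cos (Real.pi*x/2))^2) + (eG u b - eG u a) := by
  have hsub : uIcc a b ⊆ Ioo (-1:ℝ) 1 := by
    rw [uIcc_of_le hab]
    exact fun x hx => ⟨lt_of_lt_of_le ha hx.1, lt_of_le_of_lt hx.2 hb⟩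
  have hQc : ContinuousOn (fun x => (eW u x / Real.cos (Real.pi*x/2))^2) (uIcc a b) := by
    apply ContinuousOn.pow
    apply ContinuousOn.div (aux_cont_W u hC2).continuousOn (by fun_prop)
    exact fun x hx => (aux_cos_pos (hsub hx)).ne'
  have hint1 : IntervalIntegrable (fun x => (deriv u x)^2 - Real.pi^2/4*(u x)^2) MeasureTheory.volume a b :=
    (aux_cont_f u hC2).intervalIntegrable a b
  have hint2 : IntervalIntegrable (fun x => (eW u x / Real.cos (Real.pi*x/2))^2) MeasureTheory.volume a b :=
    hQc.intervalIntegrable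
  have hftc := intervalIntegral.integral_eq_sub_of_hasDerivAt
      (f := eG u)
      (f' := fun x => (deriv u x)^2 - Real.pi^2/4*(u x)^2 - (eW u x / Real.cos (Real.pi*x/2))^2)
      (fun x hx => aux_hasDerivAt_G u hC2 (hsub hx)) (hint1.sub hint2)
  rw [intervalIntegral.integral_sub hint1 hint2] at hftc
  linarith

lemma aux_W_ne (u : ℝ → ℝ) (hC2 : ContDiff ℝ 2 u)
    (hode : ∀ x ∈ Icc (-1:ℝ) 1, deriv (deriv u) x + (u x)^2 = 0)
    (hpos : ∀ x ∈ Ioo (-1:ℝ) 1, 0 < u x) :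
    ∃ x ∈ Ioo (-1:ℝ) 1, eW u x ≠ 0 := by
  by_contra h
  push_neg at h
  have hulam : ∀ x ∈ Ioo (-1:ℝ) 1, u x = Real.pi^2/4 := by
    intro x hx
    have hW0 : eW u =ᶠ[nhds x] fun _ => 0 :=
      Filter.eventuallyEq_of_mem (isOpen_Ioo.mem_nhds hx) h
    have hd0 : HasDerivAt (eW u) 0 x := (hasDerivAt_const x (0:ℝ)).congr_of_eventuallyEq hW0
    have huniq := hd0.unique (aux_hasDerivAt_W u hC2 x)
    have hcx := aux_cos_pos hx
    have hodex := hode x (Ioo_subset_Icc_self hx)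
    have hux := hpos x hx
    have hkey : u x * (Real.pi^2/4 - u x) = 0 := by
      have h2 : deriv (deriv u) x = -(u x)^2 := by linarith
      rw [h2] at huniq
      rcases mul_eq_zero.mp huniq.symm with h3 | h3
      · exact absurd h3 hcx.ne'
      · linear_combination h3
    rcases mul_eq_zero.mp hkey with h3 | h3
    · exact absurd h3 hux.ne'
    · linarith
  have h0 : (0:ℝ) ∈ Ioo (-1:ℝ) 1 := by norm_num
  have hder0 : ∀ x ∈ Ioo (-1:ℝ) 1, deriv u x = 0 := by
    intro x hx
    have hev : u =ᶠ[nhds x] fun _ => Real.pi^2/4 :=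
      Filter.eventuallyEq_of_mem (isOpen_Ioo.mem_nhds hx) hulam
    rw [hev.deriv_eq, deriv_const]
  have hdd : deriv (deriv u) 0 = 0 := by
    have hev : deriv u =ᶠ[nhds 0] fun _ => 0 :=
      Filter.eventuallyEq_of_mem (isOpen_Ioo.mem_nhds h0) hder0
    rw [hev.deriv_eq, deriv_const]
  have hfin := hode 0 (by norm_num)
  rw [hdd, hulam 0 h0] at hfin
  have hp2 : 0 < Real.pi^2/4 := by positivity
  nlinarith [hp2]

lemma aux_u_lin (u : ℝ → ℝ) (hC2 : ContDiff ℝ 2 u) (hm : u (-1) = 0) (hp : u 1 = 0)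
    {C : ℝ} (hC : ∀ y ∈ Icc (-1:ℝ) 1, ‖deriv u y‖ ≤ C) {x : ℝ} (hx : x ∈ Icc (-1:ℝ) 1) :
    |u x| ≤ C * (1 - |x|) := by
  have hdiff := hC2.differentiable (by norm_num)
  have hcont := (aux_contDiff_du u hC2).continuous
  rcases le_or_gt 0 x with hx0 | hx0
  · have heq := intervalIntegral.integral_deriv_eq_sub
      (f := u) (a := x) (b := 1) (fun y _ => hdiff.differentiableAt)
      (hcont.intervalIntegrable _ _)
    have hbb : ∀ y ∈ Set.uIoc x 1, ‖deriv u y‖ ≤ C := by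
      intro y hy
      rw [Set.uIoc_of_le hx.2] at hy
      exact hC y ⟨le_trans hx.1 hy.1.le, hy.2⟩
    have hb := intervalIntegral.norm_integral_le_of_norm_le_const hbb
    rw [heq, hp, zero_sub, norm_neg] at hb
    rw [abs_of_nonneg hx0]
    rw [abs_of_nonneg (by linarith [hx.1, hx.2] : (0:ℝ) ≤ 1 - x)] at hb
    exact hb
  · have heq := intervalIntegral.integral_deriv_eq_sub
      (f := u) (a := -1) (b := x) (fun y _ => hdiff.differentiableAt)
      (hcont.intervalIntegrable _ _)
    have hbb : ∀ y ∈ Set.uIoc (-1:ℝ) x, ‖deriv u y‖ ≤ C := by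
      intro y hy
      rw [Set.uIoc_of_le hx.1] at hy
      exact hC y ⟨hy.1.le, le_trans hy.2 hx.2⟩
    have hb := intervalIntegral.norm_integral_le_of_norm_le_const hbb
    rw [heq, hm, sub_zero] at hb
    rw [abs_of_neg hx0]
    rw [abs_of_nonneg (by linarith [hx.1, hx.2] : (0:ℝ) ≤ x - -1)] at hb
    calc |u x| ≤ C * (x - -1) := hb
      _ = C * (1 - -x) := by ring

lemma aux_G_bound (u : ℝ → ℝ) (hC2 : ContDiff ℝ 2 u) (hm : u (-1) = 0) (hp : u 1 = 0)
    {C : ℝ} (hC : ∀ y ∈ Icc (-1:ℝ) 1, ‖deriv u y‖ ≤ C)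
    {x : ℝ} (hx : x ∈ Ioo (-1:ℝ) 1) :
    |eG u x| ≤ Real.pi/2 * C^2 * (1 - |x|) := by
  have hπ := Real.pi_pos
  have hcpos := aux_cos_pos hx
  have hxa : |x| ≤ 1 := abs_le.mpr ⟨hx.1.le, hx.2.le⟩
  have hxlt : |x| < 1 := abs_lt.mpr ⟨hx.1, hx.2⟩
  have hcge := aux_cos_ge hxa
  have hu := aux_u_lin u hC2 hm hp hC (Ioo_subset_Icc_self hx)
  have hC0 : (0:ℝ) ≤ C := le_trans (norm_nonneg _) (hC 0 (by norm_num))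
  rw [eG, abs_div, abs_of_pos hcpos, div_le_iff₀ hcpos]
  have hnum : |(-(Real.pi/2) * Real.sin (Real.pi*x/2) * (u x)^2)|
      ≤ Real.pi/2 * (C*(1-|x|))^2 := by
    rw [abs_mul, abs_mul, abs_neg, abs_of_pos (by positivity : (0:ℝ) < Real.pi/2), abs_pow]
    calc Real.pi/2 * |Real.sin (Real.pi*x/2)| * |u x|^2
        ≤ Real.pi/2 * 1 * (C*(1-|x|))^2 := by
          have h1 := Real.abs_sin_le_one (Real.pi*x/2)
          gcongr <;> first | exact h1 | exact hu | exact abs_nonneg _ | positivity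
      _ = Real.pi/2 * (C*(1-|x|))^2 := by ring
  calc |(-(Real.pi/2) * Real.sin (Real.pi*x/2) * (u x)^2)|
      ≤ Real.pi/2 * (C*(1-|x|))^2 := hnum
    _ ≤ Real.pi/2 * C^2 * (1-|x|) * Real.cos (Real.pi*x/2) := by
        have ht : (0:ℝ) ≤ 1 - |x| := by linarith
        have hkey : 0 ≤ Real.pi/2 * C^2 * (1-|x|) * (Real.cos (Real.pi*x/2) - (1-|x|)) :=
          mul_nonneg (mul_nonneg (mul_nonneg (by positivity) (sq_nonneg C)) ht)
            (sub_nonneg.mpr hcge)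
        nlinarith [hkey]

lemma aux_ibp (u : ℝ → ℝ) (hC2 : ContDiff ℝ 2 u)
    (hode : ∀ x ∈ Icc (-1 : ℝ) 1, deriv (deriv u) x + (u x) ^ 2 = 0)
    (hm : u (-1) = 0) (hp : u 1 = 0) :
    ∫ x in (-1:ℝ)..1, (deriv u x)^2 = ∫ x in (-1:ℝ)..1, (u x)^3 := by
  have hdiff := hC2.differentiable (by norm_num)
  have hdu := aux_contDiff_du u hC2
  have hcdd : Continuous (deriv (deriv u)) := (contDiff_one_iff_deriv.mp hdu).2
  have hcd : Continuous (deriv u) := hdu.continuous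
  have hcu : Continuous u := hC2.continuous
  have hF : ∀ x ∈ uIcc (-1:ℝ) 1, HasDerivAt (fun y => u y * deriv u y)
      (deriv u x * deriv u x + u x * deriv (deriv u) x) x := fun x _ =>
    (hdiff.differentiableAt.hasDerivAt).mul ((hdu.differentiable one_ne_zero).differentiableAt.hasDerivAt)
  have hint : IntervalIntegrable (fun x => deriv u x * deriv u x + u x * deriv (deriv u) x)
      MeasureTheory.volume (-1) 1 :=
    ((hcd.mul hcd).add (hcu.mul hcdd)).intervalIntegrable _ _
  have hftc := intervalIntegral.integral_eq_sub_of_hasDerivAt hF hint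
  rw [hp, hm] at hftc
  simp only [zero_mul, sub_zero, sub_self] at hftc
  have hcongr : EqOn (fun x => deriv u x * deriv u x + u x * deriv (deriv u) x)
      (fun x => (deriv u x)^2 - (u x)^3) (uIcc (-1:ℝ) 1) := by
    intro x hx
    have hox := hode x (by rwa [uIcc_of_le (by norm_num : (-1:ℝ) ≤ 1)] at hx)
    have h2 : deriv (deriv u) x = -(u x)^2 := by linarith
    simp only [h2]
    ring
  rw [intervalIntegral.integral_congr hcongr] at hftc
  have hi1 : IntervalIntegrable (fun x => (deriv u x)^2) MeasureTheory.volume (-1) 1 :=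
    (hcd.pow 2).intervalIntegrable _ _
  have hi2 : IntervalIntegrable (fun x => (u x)^3) MeasureTheory.volume (-1) 1 :=
    (hcu.pow 3).intervalIntegrable _ _
  rw [intervalIntegral.integral_sub hi1 hi2] at hftc
  linarith

lemma aux_Q_int (u : ℝ → ℝ) (hC2 : ContDiff ℝ 2 u) {a b : ℝ}
    (ha : -1 < a) (hb : b < 1) (hab : a ≤ b) :
    IntervalIntegrable (fun x => (eW u x / Real.cos (Real.pi*x/2))^2)
      MeasureTheory.volume a b := by
  have hsub : uIcc a b ⊆ Ioo (-1:ℝ) 1 := by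
    rw [uIcc_of_le hab]
    exact fun x hx => ⟨lt_of_lt_of_le ha hx.1, lt_of_le_of_lt hx.2 hb⟩
  apply ContinuousOn.intervalIntegrable
  apply ContinuousOn.pow
  apply ContinuousOn.div (aux_cont_W u hC2).continuousOn (by fun_prop)
  exact fun x hx => (aux_cos_pos (hsub hx)).ne'

lemma aux_main_pos (u : ℝ → ℝ) (hC2 : ContDiff ℝ 2 u)
    (hode : ∀ x ∈ Icc (-1 : ℝ) 1, deriv (deriv u) x + (u x) ^ 2 = 0)
    (hpos : ∀ x ∈ Ioo (-1 : ℝ) 1, 0 < u x)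
    (hm : u (-1) = 0) (hp : u 1 = 0) :
    0 < ∫ x in (-1:ℝ)..1, ((deriv u x)^2 - Real.pi^2/4*(u x)^2) := by
  have hπ := Real.pi_pos
  obtain ⟨x₁, hx₁, hW⟩ := aux_W_ne u hC2 hode hpos
  have hUopen : IsOpen ({x | eW u x ≠ 0} ∩ Ioo (-1:ℝ) 1) :=
    (isOpen_ne.preimage (aux_cont_W u hC2)).inter isOpen_Ioo
  obtain ⟨r, hr, hball⟩ := Metric.isOpen_iff.mp hUopen x₁ ⟨hW, hx₁⟩
  set a₀ := x₁ - r/2 with ha₀_def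
  set b₀ := x₁ + r/2 with hb₀_def
  have hsubU : Icc a₀ b₀ ⊆ ({x | eW u x ≠ 0} ∩ Ioo (-1:ℝ) 1) := by
    intro y hy
    apply hball
    rw [Real.ball_eq_Ioo]
    exact ⟨by simp only [ha₀_def] at hy; linarith [hy.1, hr],
           by simp only [hb₀_def] at hy; linarith [hy.2, hr]⟩
  have ha₀b₀ : a₀ < b₀ := by simp only [ha₀_def, hb₀_def]; linarith
  have ha₀mem := hsubU (left_mem_Icc.mpr ha₀b₀.le)
  have hb₀mem := hsubU (right_mem_Icc.mpr ha₀b₀.le)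
  have ha₀1 : -1 < a₀ := ha₀mem.2.1
  have hb₀1 : b₀ < 1 := hb₀mem.2.2
  set ε := ∫ x in a₀..b₀, (eW u x / Real.cos (Real.pi*x/2))^2 with hε_def
  have hε : 0 < ε := by
    apply intervalIntegral_pos_of_pos_on (aux_Q_int u hC2 ha₀1 hb₀1 ha₀b₀.le)
    · intro x hx
      have hxm := hsubU (Ioo_subset_Icc_self hx)
      have hne : eW u x / Real.cos (Real.pi*x/2) ≠ 0 :=
        div_ne_zero hxm.1 (aux_cos_pos hxm.2).ne'
      exact lt_of_le_of_ne (sq_nonneg _) (Ne.symm (pow_ne_zero 2 hne))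
    · exact ha₀b₀
  obtain ⟨C, hC⟩ := isCompact_Icc.exists_bound_of_continuousOn
    (aux_contDiff_du u hC2).continuous.continuousOn (s := Icc (-1:ℝ) 1)
  obtain ⟨M, hM⟩ := isCompact_Icc.exists_bound_of_continuousOn
    (aux_cont_f u hC2).continuousOn (s := Icc (-1:ℝ) 1)
  have hC0 : (0:ℝ) ≤ C := le_trans (norm_nonneg _) (hC 0 (by norm_num))
  have hM0 : (0:ℝ) ≤ M := le_trans (norm_nonneg _) (hM 0 (by norm_num))
  set K := M + Real.pi/2*C^2 + 1 with hK_def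
  have hK : 0 < K := by positivity
  set δa := min (ε/(4*K)) (min (1+a₀) 1) with hδa_def
  set δb := min (ε/(4*K)) (min (1-b₀) 1) with hδb_def
  have hδa_pos : 0 < δa := lt_min (div_pos hε (by linarith)) (lt_min (by linarith) one_pos)
  have hδb_pos : 0 < δb := lt_min (div_pos hε (by linarith)) (lt_min (by linarith) one_pos)
  set a := -1 + δa with ha_def
  set b := 1 - δb with hb_def
  have hδa1 : δa ≤ 1 := le_trans (min_le_right _ _) (min_le_right _ _)
  have hδb1 : δb ≤ 1 := le_trans (min_le_right _ _) (min_le_right _ _)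
  have hδaK : δa ≤ ε/(4*K) := min_le_left _ _
  have hδbK : δb ≤ ε/(4*K) := min_le_left _ _
  have hδaa : δa ≤ 1 + a₀ := le_trans (min_le_right _ _) (min_le_left _ _)
  have hδbb : δb ≤ 1 - b₀ := le_trans (min_le_right _ _) (min_le_left _ _)
  have ha1 : -1 < a := by simp only [ha_def]; linarith
  have ha0 : a ≤ 0 := by simp only [ha_def]; linarith
  have haa₀ : a ≤ a₀ := by simp only [ha_def]; linarith
  have hb1 : b < 1 := by simp only [hb_def]; linarith
  have hb0 : 0 ≤ b := by simp only [hb_def]; linarith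
  have hbb₀ : b₀ ≤ b := by simp only [hb_def]; linarith
  have hab : a ≤ b := by linarith
  clear_value a₀ b₀ ε K δa δb a b
  have ha₀lt1 : a₀ < 1 := lt_trans ha₀b₀ hb₀1
  have hb₀gt : -1 < b₀ := lt_trans ha₀1 ha₀b₀
  -- Picone identity on [a, b]
  have hpic := aux_picone u hC2 ha1 hb1 hab
  -- lower bound for ∫_a^b Q
  have hQ1 := aux_Q_int u hC2 ha1 ha₀lt1 haa₀
  have hQ2 := aux_Q_int u hC2 ha₀1 hb₀1 ha₀b₀.le
  have hQ3 := aux_Q_int u hC2 hb₀gt hb1 hbb₀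
  have hQ4 := aux_Q_int u hC2 ha1 hb₀1 (le_trans haa₀ ha₀b₀.le)
  have hsplitQ : (∫ x in a..b, (eW u x / Real.cos (Real.pi*x/2))^2)
      = (∫ x in a..a₀, (eW u x / Real.cos (Real.pi*x/2))^2)
        + (∫ x in a₀..b₀, (eW u x / Real.cos (Real.pi*x/2))^2)
        + (∫ x in b₀..b, (eW u x / Real.cos (Real.pi*x/2))^2) := by
    rw [intervalIntegral.integral_add_adjacent_intervals hQ1 hQ2,
        intervalIntegral.integral_add_adjacent_intervals hQ4 hQ3]
  have hQab : ε ≤ ∫ x in a..b, (eW u x / Real.cos (Real.pi*x/2))^2 := by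
    rw [hsplitQ]
    have h1 : 0 ≤ ∫ x in a..a₀, (eW u x / Real.cos (Real.pi*x/2))^2 :=
      intervalIntegral.integral_nonneg haa₀ (fun y _ => sq_nonneg _)
    have h2 : 0 ≤ ∫ x in b₀..b, (eW u x / Real.cos (Real.pi*x/2))^2 :=
      intervalIntegral.integral_nonneg hbb₀ (fun y _ => sq_nonneg _)
    rw [hε_def]
    linarith
  -- G bounds at a and b
  have hga : |eG u a| ≤ Real.pi/2*C^2*δa := by
    have := aux_G_bound u hC2 hm hp hC (⟨ha1, by linarith⟩ : a ∈ Ioo (-1:ℝ) 1)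
    have habs : 1 - |a| = δa := by
      rw [abs_of_nonpos ha0]; simp only [ha_def]; ring
    rwa [habs] at this
  have hgb : |eG u b| ≤ Real.pi/2*C^2*δb := by
    have := aux_G_bound u hC2 hm hp hC (⟨by linarith, hb1⟩ : b ∈ Ioo (-1:ℝ) 1)
    have habs : 1 - |b| = δb := by
      rw [abs_of_nonneg hb0]; simp only [hb_def]; ring
    rwa [habs] at this
  -- split full integral
  have hfi : ∀ c d : ℝ, IntervalIntegrable
      (fun x => (deriv u x)^2 - Real.pi^2/4*(u x)^2) MeasureTheory.volume c d :=
    fun c d => (aux_cont_f u hC2).intervalIntegrable c d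
  have hsplitf : (∫ x in (-1:ℝ)..1, ((deriv u x)^2 - Real.pi^2/4*(u x)^2))
      = (∫ x in (-1:ℝ)..a, ((deriv u x)^2 - Real.pi^2/4*(u x)^2))
        + (∫ x in a..b, ((deriv u x)^2 - Real.pi^2/4*(u x)^2))
        + (∫ x in b..(1:ℝ), ((deriv u x)^2 - Real.pi^2/4*(u x)^2)) := by
    rw [intervalIntegral.integral_add_adjacent_intervals (hfi (-1) a) (hfi a b),
        intervalIntegral.integral_add_adjacent_intervals (hfi (-1) b) (hfi b 1)]
  -- tail bounds
  have htail1 : |∫ x in (-1:ℝ)..a, ((deriv u x)^2 - Real.pi^2/4*(u x)^2)| ≤ M * δa := by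
    have hbb : ∀ y ∈ Set.uIoc (-1:ℝ) a, ‖(deriv u y)^2 - Real.pi^2/4*(u y)^2‖ ≤ M := by
      intro y hy
      rw [Set.uIoc_of_le ha1.le] at hy
      exact hM y ⟨hy.1.le, by linarith [hy.2]⟩
    have h := intervalIntegral.norm_integral_le_of_norm_le_const hbb
    have habs : |a - (-1)| = δa := by
      rw [abs_of_nonneg (by linarith : (0:ℝ) ≤ a - (-1))]; simp only [ha_def]; ring
    rwa [habs] at h
  have htail2 : |∫ x in b..(1:ℝ), ((deriv u x)^2 - Real.pi^2/4*(u x)^2)| ≤ M * δb := by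
    have hbb : ∀ y ∈ Set.uIoc b (1:ℝ), ‖(deriv u y)^2 - Real.pi^2/4*(u y)^2‖ ≤ M := by
      intro y hy
      rw [Set.uIoc_of_le hb1.le] at hy
      exact hM y ⟨by linarith [hy.1], hy.2⟩
    have h := intervalIntegral.norm_integral_le_of_norm_le_const hbb
    have habs : |1 - b| = δb := by
      rw [abs_of_nonneg (by linarith : (0:ℝ) ≤ 1 - b)]; simp only [hb_def]; ring
    rwa [habs] at h
  -- assemble
  have hKδa : K * δa ≤ ε/4 := by
    calc K * δa ≤ K * (ε/(4*K)) := mul_le_mul_of_nonneg_left hδaK hK.le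
      _ = ε/4 := by field_simp
  have hKδb : K * δb ≤ ε/4 := by
    calc K * δb ≤ K * (ε/(4*K)) := mul_le_mul_of_nonneg_left hδbK hK.le
      _ = ε/4 := by field_simp
  have hKexp : M * δa + Real.pi/2*C^2*δa ≤ ε/4 := by
    have h5 : (M + Real.pi/2*C^2) * δa ≤ K * δa := by
      apply mul_le_mul_of_nonneg_right _ hδa_pos.le
      rw [hK_def]; linarith
    linarith [h5, hKδa]
  have hKexp' : M * δb + Real.pi/2*C^2*δb ≤ ε/4 := by
    have h5 : (M + Real.pi/2*C^2) * δb ≤ K * δb := by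
      apply mul_le_mul_of_nonneg_right _ hδb_pos.le
      rw [hK_def]; linarith
    linarith [h5, hKδb]
  have h1 := neg_le_of_abs_le htail1
  have h2 := neg_le_of_abs_le htail2
  have h3' := le_of_abs_le hga
  have h4 := neg_le_of_abs_le hgb
  rw [hsplitf, hpic]
  linarith

/-- If uPlus is a positive Dirichlet solution of u'' + u² = 0 on (-1,1) and μ dominates
    the Rayleigh quotient of L = d²/dx² + 2uPlus over all C¹ Dirichlet test functions
    (variational characterization of the largest eigenvalue), then μ > π²/4. -/
theorem principal_eigenvalue_gt (uPlus : ℝ → ℝ) (hC2 : ContDiff ℝ 2 uPlus)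
    (hode : ∀ x ∈ Icc (-1 : ℝ) 1, deriv (deriv uPlus) x + (uPlus x) ^ 2 = 0)
    (hpos : ∀ x ∈ Ioo (-1 : ℝ) 1, 0 < uPlus x)
    (hm : uPlus (-1) = 0) (hp : uPlus 1 = 0)
    (μ : ℝ)
    (hray : ∀ Q : ℝ → ℝ, ContDiff ℝ 1 Q → Q (-1) = 0 → Q 1 = 0 →
      (∫ x in (-1 : ℝ)..1, (-(deriv Q x) ^ 2 + 2 * uPlus x * (Q x) ^ 2))
        ≤ μ * ∫ x in (-1 : ℝ)..1, (Q x) ^ 2) :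
    Real.pi ^ 2 / 4 < μ := by
  have hcu : Continuous uPlus := hC2.continuous
  have hcd : Continuous (deriv uPlus) := (aux_contDiff_du uPlus hC2).continuous
  -- positivity of ∫ u²
  have hI2 : 0 < ∫ x in (-1:ℝ)..1, (uPlus x)^2 := by
    apply intervalIntegral_pos_of_pos_on ((hcu.pow 2).intervalIntegrable _ _)
    · exact fun x hx => pow_pos (hpos x hx) 2
    · norm_num
  -- key positivity
  have hkey := aux_main_pos uPlus hC2 hode hpos hm hp
  -- IBP
  have hibp := aux_ibp uPlus hC2 hode hm hp
  -- Rayleigh with Q = uPlus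
  have hr := hray uPlus (hC2.of_le (by norm_num)) hm hp
  have hcongr : EqOn (fun x => -(deriv uPlus x)^2 + 2 * uPlus x * (uPlus x)^2)
      (fun x => 2*(uPlus x)^3 - (deriv uPlus x)^2) (uIcc (-1:ℝ) 1) := by
    intro x _
    simp only []
    ring
  rw [intervalIntegral.integral_congr hcongr] at hr
  have hi1 : IntervalIntegrable (fun x => 2*(uPlus x)^3) MeasureTheory.volume (-1) 1 :=
    (continuous_const.mul (hcu.pow 3)).intervalIntegrable _ _
  have hi2 : IntervalIntegrable (fun x => (deriv uPlus x)^2) MeasureTheory.volume (-1) 1 :=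
    (hcd.pow 2).intervalIntegrable _ _
  rw [intervalIntegral.integral_sub hi1 hi2, intervalIntegral.integral_const_mul] at hr
  -- hr : 2 * ∫ u³ - ∫ (u')² ≤ μ * ∫ u²  and  ∫ (u')² = ∫ u³
  -- hence ∫ (u')² ≤ μ * ∫ u²
  have hdu2 : (∫ x in (-1:ℝ)..1, (deriv uPlus x)^2) ≤ μ * ∫ x in (-1:ℝ)..1, (uPlus x)^2 := by
    linarith [hibp, hr]
  -- hkey : 0 < ∫ ((u')² - π²/4 u²) = ∫ (u')² - π²/4 ∫ u²
  have hsplit : (∫ x in (-1:ℝ)..1, ((deriv uPlus x)^2 - Real.pi^2/4*(uPlus x)^2))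
      = (∫ x in (-1:ℝ)..1, (deriv uPlus x)^2)
        - Real.pi^2/4 * ∫ x in (-1:ℝ)..1, (uPlus x)^2 := by
    rw [intervalIntegral.integral_sub hi2
        (by exact (continuous_const.mul (hcu.pow 2)).intervalIntegrable _ _ :
          IntervalIntegrable (fun x => Real.pi^2/4*(uPlus x)^2) MeasureTheory.volume (-1) 1),
      intervalIntegral.integral_const_mul]
  rw [hsplit] at hkey
  have hlt : Real.pi^2/4 * (∫ x in (-1:ℝ)..1, (uPlus x)^2)
      < μ * ∫ x in (-1:ℝ)..1, (uPlus x)^2 := by linarith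
  exact lt_of_mul_lt_mul_right hlt hI2.le
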